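/- For 0 ≤ m ≤ n ≤ 2m, α_{m,n} is nonzero and its evaluation at q^{1/2} = 1 is nonzero; hence α_{m,n} is not divisible by Φ̃_1 = q^{1/2} - q^{-1/2}, i.e., d_1(α_{m,n}) = 0. -/

import Mathlib

open Finset LaurentPolynomial

noncomputable section

/-- `ℤ[q^{1/2}, q^{-1/2}]`, with `T 1` representing `q^{1/2}` (so `q = T 2`). -/
abbrev R : Type := LaurentPolynomial ℤ

/-- quantum integer `{i} = q^{i/2} - q^{-i/2}`. -/
def qint (i : ℤ) : R := T i - T (-i)

/-- falling product `{i}_n = {i}{i-1}⋯{i-n+1}`. -/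
def qfall (i : ℤ) (n : ℕ) : R := ∏ k ∈ Finset.range n, qint (i - k)

/-- quantum factorial `{n}! = {n}_n`. -/
def qfact (n : ℕ) : R := qfall n n

/-- balanced quantum binomial `[i choose n] = {i}_n / {n}!`,
defined inside `R` via the Pascal-type recursion
`[i+1 choose n+1] = q^{-(i-n)/2}[i choose n] + q^{(n+1)/2}[i choose n+1]`. -/
def qbinom : ℕ → ℕ → R
  | _, 0 => 1
  | 0, _ + 1 => 0
  | i + 1, n + 1 => T (-((i : ℤ) - n)) * qbinom i n + T ((n : ℤ) + 1) * qbinom i (n + 1)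

/-- `α_{m,n} = Σ_{k=0}^{m} (-1)^k [2m+1 choose k][2m+n-2k+1 choose 2n+1]`. -/
def qalpha (m n : ℕ) : R :=
  ∑ k ∈ Finset.range (m + 1),
    (-1 : R) ^ k * qbinom (2 * m + 1) k * qbinom (2 * m + n + 1 - 2 * k) (2 * n + 1)

/-- symmetric cyclotomic polynomial `Φ̃_l = q^{-φ(l)/2} Φ_l(q)
  = ∏_{d ∣ l} (q^{d/2} - q^{-d/2})^{μ(l/d)}`. -/
def qcyc (l : ℕ) : R :=
  T (-(Nat.totient l : ℤ)) *
    Polynomial.eval₂ (Int.castRingHom R) (T 2) (Polynomial.cyclotomic l ℤ)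

section AuxPS
open PowerSeries

lemma key1 (a b : ℕ) :
    ((1 - X : ℤ⟦X⟧) ^ a) * (invOneSubPow ℤ (a + b)).val = (invOneSubPow ℤ b).val := by
  set u : (ℤ⟦X⟧)ˣ := Units.mkOfMulEqOne (1 - X) (mk 1 : ℤ⟦X⟧)
      (Eq.trans (mul_comm _ _) (mk_one_mul_one_sub_eq_one ℤ)) with hu
  have h : u ^ a * invOneSubPow ℤ (a + b) = invOneSubPow ℤ b := by
    rw [invOneSubPow_eq_inv_one_sub_pow, invOneSubPow_eq_inv_one_sub_pow, ← hu]
    group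
  calc ((1 - X : ℤ⟦X⟧) ^ a) * (invOneSubPow ℤ (a + b)).val
      = (u ^ a * invOneSubPow ℤ (a + b)).val := by
        rw [Units.val_mul, Units.val_pow_eq_pow_val]; rfl
    _ = _ := by rw [h]

lemma expand1 (N : ℕ) :
    (1 - X ^ 2 : ℤ⟦X⟧) ^ N
      = ∑ k ∈ range (N + 1), PowerSeries.C ((-1) ^ k * (N.choose k : ℤ)) * X ^ (2 * k) := by
  rw [sub_eq_add_neg, add_comm, add_pow]
  refine Finset.sum_congr rfl fun k _ => ?_
  have h1 : (-X ^ 2 : ℤ⟦X⟧) ^ k = PowerSeries.C ((-1) ^ k) * X ^ (2 * k) := by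
    rw [neg_pow, ← pow_mul, map_pow, map_neg, map_one]
  rw [h1, one_pow, mul_one, map_mul, map_pow, map_neg, map_one, map_natCast]
  ring

lemma expand2 (N : ℕ) :
    (1 + X : ℤ⟦X⟧) ^ N = ∑ k ∈ range (N + 1), PowerSeries.C ((N.choose k : ℤ)) * X ^ k := by
  rw [add_comm, add_pow]
  refine Finset.sum_congr rfl fun k _ => ?_
  rw [one_pow, mul_one, map_natCast]
  ring

lemma coeff_term (c : ℤ) (j a : ℕ) (f : ℤ⟦X⟧) :
    (PowerSeries.coeff a) (PowerSeries.C c * X ^ j * f)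
      = if j ≤ a then c * PowerSeries.coeff (a - j) f else 0 := by
  rw [mul_assoc, coeff_C_mul, coeff_X_pow_mul']
  split_ifs <;> simp

lemma sum_pos (m n : ℕ) (h1 : m ≤ n) (h2 : n ≤ 2 * m) :
    0 < ∑ k ∈ range (m + 1),
        (-1 : ℤ) ^ k * ((2 * m + 1).choose k : ℤ) *
          (((2 * m + n + 1 - 2 * k).choose (2 * n + 1) : ℤ)) := by
  have E : (1 - X ^ 2 : ℤ⟦X⟧) ^ (2 * m + 1) * (invOneSubPow ℤ (2 * n + 2)).val
      = (1 + X : ℤ⟦X⟧) ^ (2 * m + 1) * (invOneSubPow ℤ (2 * n + 1 - 2 * m)).val := by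
    have hsplit : (1 - X ^ 2 : ℤ⟦X⟧) = (1 + X) * (1 - X) := by ring
    have hk := key1 (2 * m + 1) (2 * n + 1 - 2 * m)
    rw [show 2 * m + 1 + (2 * n + 1 - 2 * m) = 2 * n + 2 by omega] at hk
    rw [hsplit, mul_pow, mul_assoc, hk]
  have hG : ∀ i, PowerSeries.coeff i (invOneSubPow ℤ (2 * n + 2)).val
      = ((2 * n + 1 + i).choose (2 * n + 1) : ℤ) := by
    intro i
    rw [show 2 * n + 2 = (2 * n + 1) + 1 from rfl, invOneSubPow_val_succ_eq_mk_add_choose,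
      coeff_mk]
  have hG' : ∀ i, PowerSeries.coeff i (invOneSubPow ℤ (2 * n + 1 - 2 * m)).val
      = ((2 * n - 2 * m + i).choose (2 * n - 2 * m) : ℤ) := by
    intro i
    rw [show 2 * n + 1 - 2 * m = (2 * n - 2 * m) + 1 by omega,
      invOneSubPow_val_succ_eq_mk_add_choose, coeff_mk]
  have hL : PowerSeries.coeff (2 * m - n)
        ((1 - X ^ 2 : ℤ⟦X⟧) ^ (2 * m + 1) * (invOneSubPow ℤ (2 * n + 2)).val)
      = ∑ k ∈ range (m + 1),
          (-1 : ℤ) ^ k * ((2 * m + 1).choose k : ℤ) *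
            (((2 * m + n + 1 - 2 * k).choose (2 * n + 1) : ℤ)) := by
    rw [expand1, Finset.sum_mul, map_sum]
    rw [Finset.sum_congr rfl (fun k _ => coeff_term _ _ _ _)]
    rw [← Finset.sum_subset (Finset.range_subset_range.2 (by omega : m + 1 ≤ 2 * m + 1 + 1))]
    · refine Finset.sum_congr rfl fun k hk => ?_
      rw [Finset.mem_range] at hk
      by_cases h : 2 * k ≤ 2 * m - n
      · have harg : 2 * n + 1 + (2 * m - n - 2 * k) = 2 * m + n + 1 - 2 * k := by omega
        simp only [if_pos h, hG, harg]
        try ring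
      · have hz : (2 * m + n + 1 - 2 * k).choose (2 * n + 1) = 0 :=
          Nat.choose_eq_zero_of_lt (by omega)
        simp [if_neg h, hz]
    · intro k hk hk'
      rw [Finset.mem_range] at hk
      rw [Finset.mem_range, not_lt] at hk'
      rw [if_neg (by omega)]
  have hR : 0 < PowerSeries.coeff (2 * m - n) ((1 + X : ℤ⟦X⟧) ^ (2 * m + 1) *
      (invOneSubPow ℤ (2 * n + 1 - 2 * m)).val) := by
    rw [expand2, Finset.sum_mul, map_sum]
    rw [Finset.sum_congr rfl (fun k _ => coeff_term _ _ _ _)]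
    refine Finset.sum_pos' (fun k _ => ?_) ⟨2 * m - n, Finset.mem_range.2 (by omega), ?_⟩
    · split_ifs
      · rw [hG']; positivity
      · exact le_rfl
    · have h3 : 0 < (2 * m + 1).choose (2 * m - n) := Nat.choose_pos (by omega)
      simp only [if_pos le_rfl, hG', Nat.sub_self, Nat.add_zero, Nat.choose_self,
        Nat.cast_one, mul_one]
      exact_mod_cast h3
  rw [← hL, E]
  exact hR

end AuxPS

def aux_phi : R →ₐ[ℤ] ℤ := (AddMonoidAlgebra.lift ℤ ℤ ℤ) 1

lemma aux_phi_T (k : ℤ) : aux_phi (T k) = 1 := by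
  rw [aux_phi, LaurentPolynomial.T, AddMonoidAlgebra.lift_single]
  simp

lemma aux_phi_qbinom (i n : ℕ) : aux_phi (qbinom i n) = (i.choose n : ℤ) := by
  induction i generalizing n with
  | zero => cases n <;> simp [qbinom]
  | succ i ih =>
    cases n with
    | zero => simp [qbinom]
    | succ n =>
      rw [show qbinom (i + 1) (n + 1)
          = T (-((i : ℤ) - n)) * qbinom i n + T ((n : ℤ) + 1) * qbinom i (n + 1) from rfl]
      rw [map_add, map_mul, map_mul, aux_phi_T, aux_phi_T, ih, ih, one_mul, one_mul,
        Nat.choose_succ_succ]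
      push_cast
      ring

lemma aux_phi_qalpha (m n : ℕ) :
    aux_phi (qalpha m n) = ∑ k ∈ range (m + 1),
      (-1 : ℤ) ^ k * ((2 * m + 1).choose k : ℤ) *
        (((2 * m + n + 1 - 2 * k).choose (2 * n + 1) : ℤ)) := by
  rw [qalpha, map_sum]
  refine Finset.sum_congr rfl fun k _ => ?_
  rw [map_mul, map_mul, map_pow, map_neg, map_one, aux_phi_qbinom, aux_phi_qbinom]

lemma aux_phi_qcyc_one : aux_phi (qcyc 1) = 0 := by
  simp [qcyc, Polynomial.cyclotomic_one, Polynomial.eval₂_sub, Polynomial.eval₂_X,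
    Polynomial.eval₂_one, aux_phi_T]


/-- For `0 ≤ m ≤ n ≤ 2m`, `α_{m,n}` is nonzero and not divisible by
`Φ̃_1 = q^{1/2} - q^{-1/2}`, i.e. `d_1(α_{m,n}) = 0`. -/
theorem stmt_11 (m n : ℕ) (h1 : m ≤ n) (h2 : n ≤ 2 * m) :
    qalpha m n ≠ 0 ∧ ¬ qcyc 1 ∣ qalpha m n := by
  have hphi : aux_phi (qalpha m n) ≠ 0 := by
    rw [aux_phi_qalpha]
    exact ne_of_gt (sum_pos m n h1 h2)
  constructor
  · intro h
    rw [h, map_zero] at hphi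
    exact hphi rfl
  · rintro ⟨c, hc⟩
    rw [hc, map_mul, aux_phi_qcyc_one, zero_mul] at hphi
    exact hphi rfl
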